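/- Let q_1, q_2, q_{12}, q_{-12} be indeterminates. Index the 8 chambers of the B_2 arrangement in ℝ² by pairs (ε, σ) with ε ∈ {±1}² and σ ∈ S_2 (the chamber {ε_1 x_{σ(1)} > ε_2 x_{σ(2)} > 0}), and let M be the 8 × 8 matrix whose (C, C') entry is the product, over the four lines {x_1 = x_2}, {x_1 = −x_2}, {x_1 = 0}, {x_2 = 0} (with respective weights q_{12}, q_{−12}, q_1, q_2), of the weights of the lines separating C from C'. Then det M = (1 − q_{12}²)² · (1 − q_{−12}²)² · (1 − q_1²)² · (1 − q_2²)² · (1 − q_1² q_2² q_{12}² q_{−12}²)². -/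

import Mathlib

open Matrix in
private lemma det_fromBlocks_sym {n : Type*} [DecidableEq n] [Fintype n]
    {R : Type*} [CommRing R] (A B : Matrix n n R) :
    (Matrix.fromBlocks A B B A).det = (A + B).det * (A - B).det := by
  have h : (fromBlocks 1 1 0 1 : Matrix (n ⊕ n) (n ⊕ n) R) * fromBlocks A B B A *
      fromBlocks 1 (-1) 0 1 = fromBlocks (A + B) 0 B (A - B) := by
    simp [Matrix.fromBlocks_multiply, Matrix.mul_one, Matrix.one_mul, Matrix.mul_neg]
    constructor <;> abel
  have hd := congrArg Matrix.det h
  rw [Matrix.det_mul, Matrix.det_mul, Matrix.det_fromBlocks_zero₂₁,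
    Matrix.det_fromBlocks_zero₂₁, Matrix.det_fromBlocks_zero₁₂] at hd
  simpa using hd

private lemma det_fin_four' {R : Type*} [CommRing R] (a00 a01 a02 a03 a10 a11 a12 a13 a20 a21 a22 a23 a30 a31 a32 a33 : R) :
    (!![a00, a01, a02, a03; a10, a11, a12, a13; a20, a21, a22, a23; a30, a31, a32, a33] : Matrix (Fin 4) (Fin 4) R).det =
      a00*a11*a22*a33 - a00*a11*a23*a32 - a00*a12*a21*a33 + a00*a12*a23*a31 + a00*a13*a21*a32 - a00*a13*a22*a31 - a01*a10*a22*a33 + a01*a10*a23*a32 + a01*a12*a20*a33 - a01*a12*a23*a30 - a01*a13*a20*a32 + a01*a13*a22*a30 + a02*a10*a21*a33 - a02*a10*a23*a31 - a02*a11*a20*a33 + a02*a11*a23*a30 + a02*a13*a20*a31 - a02*a13*a21*a30 - a03*a10*a21*a32 + a03*a10*a22*a31 + a03*a11*a20*a32 - a03*a11*a22*a30 - a03*a12*a20*a31 + a03*a12*a21*a30 := by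
  rw [Matrix.det_succ_row_zero]
  simp [Fin.sum_univ_succ, Matrix.det_fin_three, Matrix.submatrix_apply, Fin.succAbove]
  ring

private lemma add_fin_four {R : Type*} [CommRing R] (a00 a01 a02 a03 a10 a11 a12 a13 a20 a21 a22 a23 a30 a31 a32 a33 b00 b01 b02 b03 b10 b11 b12 b13 b20 b21 b22 b23 b30 b31 b32 b33 : R) :
    (!![a00, a01, a02, a03; a10, a11, a12, a13; a20, a21, a22, a23; a30, a31, a32, a33] : Matrix (Fin 4) (Fin 4) R) + !![b00, b01, b02, b03; b10, b11, b12, b13; b20, b21, b22, b23; b30, b31, b32, b33] =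
    !![a00+b00, a01+b01, a02+b02, a03+b03; a10+b10, a11+b11, a12+b12, a13+b13; a20+b20, a21+b21, a22+b22, a23+b23; a30+b30, a31+b31, a32+b32, a33+b33] := by
  ext i j
  fin_cases i <;> fin_cases j <;> rfl

private lemma sub_fin_four {R : Type*} [CommRing R] (a00 a01 a02 a03 a10 a11 a12 a13 a20 a21 a22 a23 a30 a31 a32 a33 b00 b01 b02 b03 b10 b11 b12 b13 b20 b21 b22 b23 b30 b31 b32 b33 : R) :
    (!![a00, a01, a02, a03; a10, a11, a12, a13; a20, a21, a22, a23; a30, a31, a32, a33] : Matrix (Fin 4) (Fin 4) R) - !![b00, b01, b02, b03; b10, b11, b12, b13; b20, b21, b22, b23; b30, b31, b32, b33] =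
    !![a00-b00, a01-b01, a02-b02, a03-b03; a10-b10, a11-b11, a12-b12, a13-b13; a20-b20, a21-b21, a22-b22, a23-b23; a30-b30, a31-b31, a32-b32, a33-b33] := by
  ext i j
  fin_cases i <;> fin_cases j <;> rfl

private def B2c : Fin 4 ⊕ Fin 4 → (Fin 2 → Bool) × Equiv.Perm (Fin 2) :=
  Sum.elim
    ![(![false, false], 1), (![false, false], Equiv.swap 0 1),
      (![false, true], 1), (![false, true], Equiv.swap 0 1)]
    ![(![true, true], 1), (![true, true], Equiv.swap 0 1),
      (![true, false], 1), (![true, false], Equiv.swap 0 1)]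

private lemma B2c_bij : Function.Bijective B2c := by decide

set_option maxHeartbeats 2000000 in
/-- Varchenko determinant of the `B_2` arrangement (four lines in the plane): chambers are
indexed by pairs `(ε, σ)` with `ε ∈ {±1}²`, `σ ∈ S_2` (the chamber
`{ε_1 x_{σ(1)} > ε_2 x_{σ(2)} > 0}`, containing the canonical point `x_{σ(k)} = ±(2−k)`),
a line separates two chambers iff its linear form has opposite signs at the canonical points,
and the entry of `M` is the product of the weights of the separating lines. -/
theorem B2_varchenko (R : Type*) [CommRing R] (q1 q2 q12 qm12 : R)
    (pt : (Fin 2 → Bool) × Equiv.Perm (Fin 2) → Fin 2 → ℤ)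
    (hpt : ∀ C i, pt C i = (if C.1 (C.2⁻¹ i) then 1 else -1) * ((2 : ℤ) - (C.2⁻¹ i : ℕ)))
    (M : Matrix ((Fin 2 → Bool) × Equiv.Perm (Fin 2))
      ((Fin 2 → Bool) × Equiv.Perm (Fin 2)) R)
    (hM : ∀ C C', M C C' =
      (if (0 < pt C 0 - pt C 1 ↔ 0 < pt C' 0 - pt C' 1) then 1 else q12) *
      (if (0 < pt C 0 + pt C 1 ↔ 0 < pt C' 0 + pt C' 1) then 1 else qm12) *
      (if (0 < pt C 0 ↔ 0 < pt C' 0) then 1 else q1) *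
      (if (0 < pt C 1 ↔ 0 < pt C' 1) then 1 else q2)) :
    M.det = (1 - q12 ^ 2) ^ 2 * (1 - qm12 ^ 2) ^ 2 * (1 - q1 ^ 2) ^ 2 * (1 - q2 ^ 2) ^ 2 *
      (1 - q1 ^ 2 * q2 ^ 2 * q12 ^ 2 * qm12 ^ 2) ^ 2 := by
  rw [← Matrix.det_submatrix_equiv_self (Equiv.ofBijective B2c B2c_bij) M]
  have hsub : M.submatrix (Equiv.ofBijective B2c B2c_bij) (Equiv.ofBijective B2c B2c_bij) =
      Matrix.fromBlocks
        !![1, q12, q2, q12*q1;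
       q12, 1, q12*q2, q1;
       q2, q12*q2, 1, q12*q1*q2;
       q12*q1, q1, q12*q1*q2, 1]
        !![q12*qm12*q1*q2, qm12*q1*q2, q12*qm12*q1, qm12*q2;
       qm12*q1*q2, q12*qm12*q1*q2, qm12*q1, q12*qm12*q2;
       q12*qm12*q1, qm12*q1, q12*qm12*q1*q2, qm12;
       qm12*q2, q12*qm12*q2, qm12, q12*qm12*q1*q2]
        !![q12*qm12*q1*q2, qm12*q1*q2, q12*qm12*q1, qm12*q2;
       qm12*q1*q2, q12*qm12*q1*q2, qm12*q1, q12*qm12*q2;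
       q12*qm12*q1, qm12*q1, q12*qm12*q1*q2, qm12;
       qm12*q2, q12*qm12*q2, qm12, q12*qm12*q1*q2]
        !![1, q12, q2, q12*q1;
       q12, 1, q12*q2, q1;
       q2, q12*q2, 1, q12*q1*q2;
       q12*q1, q1, q12*q1*q2, 1] := by
    ext i j
    rcases i with i | i <;> rcases j with j | j <;> fin_cases i <;> fin_cases j <;>
      simp only [Matrix.submatrix_apply, Equiv.ofBijective_apply, B2c, Sum.elim_inl,
        Sum.elim_inr, Matrix.cons_val_zero, Matrix.cons_val_one, Matrix.head_cons,
        Matrix.cons_val_two, Matrix.cons_val_three, Matrix.tail_cons, hM, hpt] <;>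
      norm_num [Equiv.swap_apply_left, Equiv.swap_apply_right, Matrix.fromBlocks,
        Matrix.cons_val_zero, Matrix.cons_val_one, Matrix.head_cons]
  rw [hsub, det_fromBlocks_sym, add_fin_four, sub_fin_four]
  have hA : (!![1 + q12*qm12*q1*q2, q12 + qm12*q1*q2, q2 + q12*qm12*q1, q12*q1 + qm12*q2;
       q12 + qm12*q1*q2, 1 + q12*qm12*q1*q2, q12*q2 + qm12*q1, q1 + q12*qm12*q2;
       q2 + q12*qm12*q1, q12*q2 + qm12*q1, 1 + q12*qm12*q1*q2, q12*q1*q2 + qm12;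
       q12*q1 + qm12*q2, q1 + q12*qm12*q2, q12*q1*q2 + qm12, 1 + q12*qm12*q1*q2] : Matrix (Fin 4) (Fin 4) R).det =
      (1:R) - q2^2 - q1^2 + q1^2 * q2^2 - qm12^2 + qm12^2 * q2^2 + qm12^2 * q1^2 - qm12^2 * q1^2 * q2^2 - 2 * q12 * qm12 * q1 * q2 + 2 * q12 * qm12 * q1 * q2^3 + 2 * q12 * qm12 * q1^3 * q2 - 2 * q12 * qm12 * q1^3 * q2^3 + 2 * q12 * qm12^3 * q1 * q2 - 2 * q12 * qm12^3 * q1 * q2^3 - 2 * q12 * qm12^3 * q1^3 * q2 + 2 * q12 * qm12^3 * q1^3 * q2^3 - q12^2 + q12^2 * q2^2 + q12^2 * q1^2 - q12^2 * q1^2 * q2^2 + q12^2 * qm12^2 - q12^2 * qm12^2 * q2^2 - q12^2 * qm12^2 * q1^2 + 2 * q12^2 * qm12^2 * q1^2 * q2^2 - q12^2 * qm12^2 * q1^2 * q2^4 - q12^2 * qm12^2 * q1^4 * q2^2 + q12^2 * qm12^2 * q1^4 * q2^4 - q12^2 * qm12^4 * q1^2 * q2^2 + q12^2 * qm12^4 *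 q1^2 * q2^4 + q12^2 * qm12^4 * q1^4 * q2^2 - q12^2 * qm12^4 * q1^4 * q2^4 + 2 * q12^3 * qm12 * q1 * q2 - 2 * q12^3 * qm12 * q1 * q2^3 - 2 * q12^3 * qm12 * q1^3 * q2 + 2 * q12^3 * qm12 * q1^3 * q2^3 - 2 * q12^3 * qm12^3 * q1 * q2 + 2 * q12^3 * qm12^3 * q1 * q2^3 + 2 * q12^3 * qm12^3 * q1^3 * q2 - 2 * q12^3 * qm12^3 * q1^3 * q2^3 - q12^4 * qm12^2 * q1^2 * q2^2 + q12^4 * qm12^2 * q1^2 * q2^4 + q12^4 * qm12^2 * q1^4 * q2^2 - q12^4 * qm12^2 * q1^4 * q2^4 + q12^4 * qm12^4 * q1^2 * q2^2 - q12^4 * qm12^4 * q1^2 * q2^4 - q12^4 * qm12^4 * q1^4 * q2^2 + q12^4 * qm12^4 * q1^4 * q2^4 := by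
    rw [det_fin_four']
    ring
  have hB : (!![1 - q12*qm12*q1*q2, q12 - qm12*q1*q2, q2 - q12*qm12*q1, q12*q1 - qm12*q2;
       q12 - qm12*q1*q2, 1 - q12*qm12*q1*q2, q12*q2 - qm12*q1, q1 - q12*qm12*q2;
       q2 - q12*qm12*q1, q12*q2 - qm12*q1, 1 - q12*qm12*q1*q2, q12*q1*q2 - qm12;
       q12*q1 - qm12*q2, q1 - q12*qm12*q2, q12*q1*q2 - qm12, 1 - q12*qm12*q1*q2] : Matrix (Fin 4) (Fin 4) R).det =
      (1:R) - q2^2 - q1^2 + q1^2 * q2^2 - qm12^2 + qm12^2 * q2^2 + qm12^2 * q1^2 - qm12^2 * q1^2 * q2^2 + 2 * q12 * qm12 * q1 * q2 - 2 * q12 * qm12 * q1 * q2^3 - 2 * q12 * qm12 * q1^3 * q2 + 2 * q12 * qm12 * q1^3 * q2^3 - 2 * q12 * qm12^3 * q1 * q2 + 2 * q12 * qm12^3 * q1 * q2^3 + 2 * q12 * qm12^3 * q1^3 * q2 - 2 * q12 * qm12^3 * q1^3 * q2^3 - q12^2 + q12^2 * q2^2 + q12^2 * q1^2 - q12^2 *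 q1^2 * q2^2 + q12^2 * qm12^2 - q12^2 * qm12^2 * q2^2 - q12^2 * qm12^2 * q1^2 + 2 * q12^2 * qm12^2 * q1^2 * q2^2 - q12^2 * qm12^2 * q1^2 * q2^4 - q12^2 * qm12^2 * q1^4 * q2^2 + q12^2 * qm12^2 * q1^4 * q2^4 - q12^2 * qm12^4 * q1^2 * q2^2 + q12^2 * qm12^4 * q1^2 * q2^4 + q12^2 * qm12^4 * q1^4 * q2^2 - q12^2 * qm12^4 * q1^4 * q2^4 - 2 * q12^3 * qm12 * q1 * q2 + 2 * q12^3 * qm12 * q1 * q2^3 + 2 * q12^3 * qm12 * q1^3 * q2 - 2 * q12^3 * qm12 * q1^3 * q2^3 + 2 * q12^3 * qm12^3 * q1 * q2 - 2 * q12^3 * qm12^3 * q1 * q2^3 - 2 * q12^3 * qm12^3 * q1^3 * q2 + 2 * q12^3 * qm12^3 * q1^3 * q2^3 - q12^4 * qm12^2 * q1^2 * q2^2 + q12^4 * qm12^2 * q1^2 * q2^4 + q12^4 * qm12^2 * q1^4 * q2^2 - q12^4 * qm12^2 * q1^4 * q2^4 + q12^4 * qm12^4 * q1^2 * q2^2 -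 q12^4 * qm12^4 * q1^2 * q2^4 - q12^4 * qm12^4 * q1^4 * q2^2 + q12^4 * qm12^4 * q1^4 * q2^4 := by
    rw [det_fin_four']
    ring
  rw [hA, hB]
  ring
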